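/- Let r_B, r_C > 0 with r_B < 1 < r_B + r_C, and define the polytope P = {(x_A, x_C, x_B) ∈ [0,1]³ : x_A·r_B + x_B·r_B + x_C·r_C = 1}. Let f(x_A, x_C, x_B) = ℓ + 2(1−x_C)(1−ℓx_A) + 2aℓ(1−x_B) + 2a·max(1−x_B−x_A, 0) for constants ℓ ∈ (0,1), a ∈ (0,1). Then f attains its minimum over P at a point with at most one non-integral (i.e., strictly between 0 and 1) coordinate. -/

import Mathlib

private def Pcube (rB rC : ℝ) : Set (ℝ×ℝ×ℝ) :=
  {q | (0 ≤ q.1 ∧ q.1 ≤ 1) ∧ (0 ≤ q.2.1 ∧ q.2.1 ≤ 1) ∧ (0 ≤ q.2.2 ∧ q.2.2 ≤ 1) ∧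
    q.1*rB + q.2.2*rB + q.2.1*rC = 1}

private def Fg (ℓ a : ℝ) (q : ℝ×ℝ×ℝ) : ℝ :=
  ℓ + 2*(1-q.2.1)*(1-ℓ*q.1) + 2*a*ℓ*(1-q.2.2) + 2*a*max (1-q.2.2-q.1) 0

private lemma exists_min (rB rC ℓ a : ℝ) (hrC : 0 < rC) (hrB1 : rB < 1)
    (hsum : 1 < rB + rC) :
    ∃ p ∈ Pcube rB rC, ∀ q ∈ Pcube rB rC, Fg ℓ a p ≤ Fg ℓ a q := by
  have hco : IsCompact (Pcube rB rC) := by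
    have heq : Pcube rB rC = (Set.Icc 0 1 ×ˢ (Set.Icc 0 1 ×ˢ Set.Icc 0 1)) ∩
        {q : ℝ×ℝ×ℝ | q.1*rB + q.2.2*rB + q.2.1*rC = 1} := by
      ext ⟨x, y, z⟩
      simp [Pcube, Set.mem_Icc, Set.mem_prod, Prod.le_def]
      tauto
    rw [heq]
    exact (isCompact_Icc.prod (isCompact_Icc.prod isCompact_Icc)).inter_right
      (isClosed_eq (by fun_prop) continuous_const)
  have hne : (Pcube rB rC).Nonempty := by
    refine ⟨(0, (1-rB)/rC, 1), ⟨by norm_num, by norm_num⟩, ⟨?_, ?_⟩, ⟨by norm_num, by norm_num⟩, ?_⟩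
    · apply div_nonneg (by linarith) hrC.le
    · rw [div_le_one hrC]; linarith
    · show 0*rB + 1*rB + (1-rB)/rC*rC = 1
      field_simp; ring
  have hcont : ContinuousOn (Fg ℓ a) (Pcube rB rC) := by
    apply Continuous.continuousOn
    unfold Fg
    fun_prop
  obtain ⟨p, hp, hmin⟩ := hco.exists_isMinOn hne hcont
  exact ⟨p, hp, fun q hq => hmin hq⟩
private lemma Pcube_mk {rB rC x y z : ℝ} :
    (x, y, z) ∈ Pcube rB rC ↔
      (0 ≤ x ∧ x ≤ 1) ∧ (0 ≤ y ∧ y ≤ 1) ∧ (0 ≤ z ∧ z ≤ 1) ∧ x*rB + z*rB + y*rC = 1 :=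
  Iff.rfl

private lemma endpoint_min (c2 c1 c0 : ℝ) (hc2 : c2 ≤ 0) {tlo thi : ℝ}
    (h1 : tlo ≤ 0) (h2 : 0 ≤ thi) :
    c2*tlo^2 + c1*tlo + c0 ≤ c0 ∨ c2*thi^2 + c1*thi + c0 ≤ c0 := by
  by_contra h
  push_neg at h
  obtain ⟨hP, hQ⟩ := h
  have hP' : 0 < c2*tlo^2 + c1*tlo := by linarith
  have hQ' : 0 < c2*thi^2 + c1*thi := by linarith
  rcases h1.lt_or_eq with h1' | h1'
  · rcases h2.lt_or_eq with h2' | h2'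
    · nlinarith [mul_pos hP' h2', mul_pos hQ' (neg_pos.2 h1'),
        mul_nonneg (mul_nonneg (mul_nonneg (neg_nonneg.2 hc2) (neg_nonneg.2 h1)) h2)
          (by linarith : (0:ℝ) ≤ thi - tlo)]
    · rw [← h2'] at hQ'; nlinarith
  · rw [h1'] at hP'; nlinarith

private lemma move_pick {F : ℝ×ℝ×ℝ → ℝ} {S : Set (ℝ×ℝ×ℝ)} {p plo phi : ℝ×ℝ×ℝ}
    {tlo thi c2 c1 : ℝ}
    (hmin : ∀ q ∈ S, F p ≤ F q) (hc2 : c2 ≤ 0) (h1 : tlo ≤ 0) (h2 : 0 ≤ thi)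
    (elo : F plo = c2*tlo^2 + c1*tlo + F p) (ehi : F phi = c2*thi^2 + c1*thi + F p) :
    (∀ q ∈ S, F plo ≤ F q) ∨ (∀ q ∈ S, F phi ≤ F q) := by
  rcases endpoint_min c2 c1 (F p) hc2 h1 h2 with h | h
  · exact Or.inl fun q hq => (elo.trans_le h).trans (hmin q hq)
  · exact Or.inr fun q hq => (ehi.trans_le h).trans (hmin q hq)
private lemma step1 {rB rC ℓ a : ℝ} {p : ℝ×ℝ×ℝ}
    (hp : p ∈ Pcube rB rC) (hmin : ∀ q ∈ Pcube rB rC, Fg ℓ a p ≤ Fg ℓ a q) :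
    ∃ p' ∈ Pcube rB rC, (∀ q ∈ Pcube rB rC, Fg ℓ a p' ≤ Fg ℓ a q) ∧
      (p'.1 = 0 ∨ p'.1 = 1 ∨ p'.2.2 = 0 ∨ p'.2.2 = 1) := by
  obtain ⟨yA, yC, yB⟩ := p
  obtain ⟨⟨hA0, hA1⟩, ⟨hC0, hC1⟩, ⟨hB0, hB1⟩, hcon⟩ := hp
  simp only at hA0 hA1 hC0 hC1 hB0 hB1 hcon
  set tlo := max (-yA) (yB - 1) with htlo
  set thi := min (1 - yA) yB with hthi
  have h1 : tlo ≤ 0 := max_le (by linarith) (by linarith)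
  have h2 : 0 ≤ thi := le_min (by linarith) (by linarith)
  have l1 : -yA ≤ tlo := le_max_left _ _
  have l2 : yB - 1 ≤ tlo := le_max_right _ _
  have l3 : thi ≤ 1 - yA := min_le_left _ _
  have l4 : thi ≤ yB := min_le_right _ _
  have hloS : (yA + tlo, yC, yB - tlo) ∈ Pcube rB rC :=
    Pcube_mk.mpr ⟨⟨by linarith, by linarith⟩, ⟨hC0, hC1⟩, ⟨by linarith, by linarith⟩,
      by linear_combination hcon⟩
  have hhiS : (yA + thi, yC, yB - thi) ∈ Pcube rB rC :=
    Pcube_mk.mpr ⟨⟨by linarith, by linarith⟩, ⟨hC0, hC1⟩, ⟨by linarith, by linarith⟩,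
      by linear_combination hcon⟩
  have key := move_pick (c2 := 0) (c1 := 2*ℓ*(a - (1 - yC)))
      (plo := (yA + tlo, yC, yB - tlo)) (phi := (yA + thi, yC, yB - thi))
      (tlo := tlo) (thi := thi) hmin le_rfl h1 h2
      (by simp only [Fg]
          rw [show 1 - (yB - tlo) - (yA + tlo) = 1 - yB - yA by ring]
          ring)
      (by simp only [Fg]
          rw [show 1 - (yB - thi) - (yA + thi) = 1 - yB - yA by ring]
          ring)
  rcases key with h | h
  · refine ⟨_, hloS, h, ?_⟩
    rcases max_choice (-yA) (yB - 1) with hm | hm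
    · left; simp only; rw [htlo, hm]; ring
    · right; right; right; simp only; rw [htlo, hm]; ring
  · refine ⟨_, hhiS, h, ?_⟩
    rcases min_choice (1 - yA) yB with hm | hm
    · right; left; simp only; rw [hthi, hm]; ring
    · right; right; left; simp only; rw [hthi, hm]; ring
private lemma step2A {rB rC ℓ a : ℝ} (hrB : 0 < rB) (hrC : 0 < rC) {p : ℝ×ℝ×ℝ}
    (hp : p ∈ Pcube rB rC) (hmin : ∀ q ∈ Pcube rB rC, Fg ℓ a p ≤ Fg ℓ a q)
    (hpA : p.1 = 0 ∨ p.1 = 1) :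
    ∃ p' ∈ Pcube rB rC, (∀ q ∈ Pcube rB rC, Fg ℓ a p' ≤ Fg ℓ a q) ∧
      (p'.1 = 0 ∨ p'.1 = 1) ∧ (p'.2.1 = 0 ∨ p'.2.1 = 1 ∨ p'.2.2 = 0 ∨ p'.2.2 = 1) := by
  obtain ⟨yA, yC, yB⟩ := p
  obtain ⟨⟨hA0, hA1⟩, ⟨hC0, hC1⟩, ⟨hB0, hB1⟩, hcon⟩ := hp
  simp only at hA0 hA1 hC0 hC1 hB0 hB1 hcon hpA
  set tlo := max (-(yB/rC)) (-((1-yC)/rB)) with htlo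
  set thi := min ((1-yB)/rC) (yC/rB) with hthi
  have h1 : tlo ≤ 0 := max_le (neg_nonpos.2 (div_nonneg hB0 hrC.le))
    (neg_nonpos.2 (div_nonneg (by linarith) hrB.le))
  have h2 : 0 ≤ thi := le_min (div_nonneg (by linarith) hrC.le) (div_nonneg hC0 hrB.le)
  have l1 : -yB ≤ tlo*rC := by
    have h := mul_le_mul_of_nonneg_right (le_max_left (-(yB/rC)) (-((1-yC)/rB))) hrC.le
    rwa [show -(yB/rC)*rC = -yB by field_simp] at h
  have l2 : -(1-yC) ≤ tlo*rB := by
    have h := mul_le_mul_of_nonneg_right (le_max_right (-(yB/rC)) (-((1-yC)/rB))) hrB.le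
    rwa [show -((1-yC)/rB)*rB = -(1-yC) by field_simp] at h
  have l3 : thi*rC ≤ 1-yB := by
    have h := mul_le_mul_of_nonneg_right (min_le_left ((1-yB)/rC) (yC/rB)) hrC.le
    rwa [show (1-yB)/rC*rC = 1-yB by field_simp] at h
  have l4 : thi*rB ≤ yC := by
    have h := mul_le_mul_of_nonneg_right (min_le_right ((1-yB)/rC) (yC/rB)) hrB.le
    rwa [show yC/rB*rB = yC by field_simp] at h
  have n1 : tlo*rB ≤ 0 := mul_nonpos_of_nonpos_of_nonneg h1 hrB.le
  have n2 : tlo*rC ≤ 0 := mul_nonpos_of_nonpos_of_nonneg h1 hrC.le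
  have n3 : (0:ℝ) ≤ thi*rB := mul_nonneg h2 hrB.le
  have n4 : (0:ℝ) ≤ thi*rC := mul_nonneg h2 hrC.le
  have hloS : (yA, yC - tlo*rB, yB + tlo*rC) ∈ Pcube rB rC :=
    Pcube_mk.mpr ⟨⟨hA0, hA1⟩, ⟨by linarith, by linarith⟩, ⟨by linarith, by linarith⟩,
      by linear_combination hcon⟩
  have hhiS : (yA, yC - thi*rB, yB + thi*rC) ∈ Pcube rB rC :=
    Pcube_mk.mpr ⟨⟨hA0, hA1⟩, ⟨by linarith, by linarith⟩, ⟨by linarith, by linarith⟩,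
      by linear_combination hcon⟩
  have tight : ∀ t, (t = tlo ∨ t = thi) →
      (yC - t*rB = 0 ∨ yC - t*rB = 1 ∨ yB + t*rC = 0 ∨ yB + t*rC = 1) := by
    rintro t (rfl | rfl)
    · rcases max_choice (-(yB/rC)) (-((1-yC)/rB)) with hm | hm
      · right; right; left; rw [htlo, hm]; field_simp; ring
      · right; left; rw [htlo, hm]; field_simp; ring
    · rcases min_choice ((1-yB)/rC) (yC/rB) with hm | hm
      · right; right; right; rw [hthi, hm]; field_simp; ring
      · left; rw [hthi, hm]; field_simp; ring
  rcases hpA with rfl | rfl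
  · have key := move_pick (c2 := 0) (c1 := 2*rB - 2*a*ℓ*rC - 2*a*rC)
        (plo := (0, yC - tlo*rB, yB + tlo*rC)) (phi := (0, yC - thi*rB, yB + thi*rC))
        (tlo := tlo) (thi := thi) hmin le_rfl h1 h2
        (by simp only [Fg]
            rw [max_eq_left (show (0:ℝ) ≤ 1 - (yB + tlo*rC) - 0 by linarith),
              max_eq_left (show (0:ℝ) ≤ 1 - yB - 0 by linarith)]
            ring)
        (by simp only [Fg]
            rw [max_eq_left (show (0:ℝ) ≤ 1 - (yB + thi*rC) - 0 by linarith),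
              max_eq_left (show (0:ℝ) ≤ 1 - yB - 0 by linarith)]
            ring)
    rcases key with h | h
    · exact ⟨_, hloS, h, Or.inl rfl, by simpa using tight tlo (Or.inl rfl)⟩
    · exact ⟨_, hhiS, h, Or.inl rfl, by simpa using tight thi (Or.inr rfl)⟩
  · have key := move_pick (c2 := 0) (c1 := 2*(1-ℓ)*rB - 2*a*ℓ*rC)
        (plo := (1, yC - tlo*rB, yB + tlo*rC)) (phi := (1, yC - thi*rB, yB + thi*rC))
        (tlo := tlo) (thi := thi) hmin le_rfl h1 h2
        (by simp only [Fg]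
            rw [max_eq_right (show 1 - (yB + tlo*rC) - 1 ≤ (0:ℝ) by linarith),
              max_eq_right (show 1 - yB - 1 ≤ (0:ℝ) by linarith)]
            ring)
        (by simp only [Fg]
            rw [max_eq_right (show 1 - (yB + thi*rC) - 1 ≤ (0:ℝ) by linarith),
              max_eq_right (show 1 - yB - 1 ≤ (0:ℝ) by linarith)]
            ring)
    rcases key with h | h
    · exact ⟨_, hloS, h, Or.inr rfl, by simpa using tight tlo (Or.inl rfl)⟩
    · exact ⟨_, hhiS, h, Or.inr rfl, by simpa using tight thi (Or.inr rfl)⟩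
private lemma step2B {rB rC ℓ a : ℝ} (hrB : 0 < rB) (hrC : 0 < rC) (hℓ0 : 0 ≤ ℓ)
    {p : ℝ×ℝ×ℝ}
    (hp : p ∈ Pcube rB rC) (hmin : ∀ q ∈ Pcube rB rC, Fg ℓ a p ≤ Fg ℓ a q)
    (hpB : p.2.2 = 0 ∨ p.2.2 = 1) :
    ∃ p' ∈ Pcube rB rC, (∀ q ∈ Pcube rB rC, Fg ℓ a p' ≤ Fg ℓ a q) ∧
      (p'.2.2 = 0 ∨ p'.2.2 = 1) ∧ (p'.1 = 0 ∨ p'.1 = 1 ∨ p'.2.1 = 0 ∨ p'.2.1 = 1) := by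
  obtain ⟨yA, yC, yB⟩ := p
  obtain ⟨⟨hA0, hA1⟩, ⟨hC0, hC1⟩, ⟨hB0, hB1⟩, hcon⟩ := hp
  simp only at hA0 hA1 hC0 hC1 hB0 hB1 hcon hpB
  set tlo := max (-(yA/rC)) (-((1-yC)/rB)) with htlo
  set thi := min ((1-yA)/rC) (yC/rB) with hthi
  have h1 : tlo ≤ 0 := max_le (neg_nonpos.2 (div_nonneg hA0 hrC.le))
    (neg_nonpos.2 (div_nonneg (by linarith) hrB.le))
  have h2 : 0 ≤ thi := le_min (div_nonneg (by linarith) hrC.le) (div_nonneg hC0 hrB.le)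
  have l1 : -yA ≤ tlo*rC := by
    have h := mul_le_mul_of_nonneg_right (le_max_left (-(yA/rC)) (-((1-yC)/rB))) hrC.le
    rwa [show -(yA/rC)*rC = -yA by field_simp] at h
  have l2 : -(1-yC) ≤ tlo*rB := by
    have h := mul_le_mul_of_nonneg_right (le_max_right (-(yA/rC)) (-((1-yC)/rB))) hrB.le
    rwa [show -((1-yC)/rB)*rB = -(1-yC) by field_simp] at h
  have l3 : thi*rC ≤ 1-yA := by
    have h := mul_le_mul_of_nonneg_right (min_le_left ((1-yA)/rC) (yC/rB)) hrC.le
    rwa [show (1-yA)/rC*rC = 1-yA by field_simp] at h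
  have l4 : thi*rB ≤ yC := by
    have h := mul_le_mul_of_nonneg_right (min_le_right ((1-yA)/rC) (yC/rB)) hrB.le
    rwa [show yC/rB*rB = yC by field_simp] at h
  have n1 : tlo*rB ≤ 0 := mul_nonpos_of_nonpos_of_nonneg h1 hrB.le
  have n2 : tlo*rC ≤ 0 := mul_nonpos_of_nonpos_of_nonneg h1 hrC.le
  have n3 : (0:ℝ) ≤ thi*rB := mul_nonneg h2 hrB.le
  have n4 : (0:ℝ) ≤ thi*rC := mul_nonneg h2 hrC.le
  have hc2 : -2*ℓ*rB*rC ≤ 0 := by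
    have : (0:ℝ) ≤ 2*ℓ*rB*rC := by positivity
    linarith
  have hloS : (yA + tlo*rC, yC - tlo*rB, yB) ∈ Pcube rB rC :=
    Pcube_mk.mpr ⟨⟨by linarith, by linarith⟩, ⟨by linarith, by linarith⟩, ⟨hB0, hB1⟩,
      by linear_combination hcon⟩
  have hhiS : (yA + thi*rC, yC - thi*rB, yB) ∈ Pcube rB rC :=
    Pcube_mk.mpr ⟨⟨by linarith, by linarith⟩, ⟨by linarith, by linarith⟩, ⟨hB0, hB1⟩,
      by linear_combination hcon⟩
  have tight : ∀ t, (t = tlo ∨ t = thi) →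
      (yA + t*rC = 0 ∨ yA + t*rC = 1 ∨ yC - t*rB = 0 ∨ yC - t*rB = 1) := by
    rintro t (rfl | rfl)
    · rcases max_choice (-(yA/rC)) (-((1-yC)/rB)) with hm | hm
      · left; rw [htlo, hm]; field_simp; ring
      · right; right; right; rw [htlo, hm]; field_simp; ring
    · rcases min_choice ((1-yA)/rC) (yC/rB) with hm | hm
      · right; left; rw [hthi, hm]; field_simp; ring
      · right; right; left; rw [hthi, hm]; field_simp; ring
  rcases hpB with rfl | rfl
  · have key := move_pick (c2 := -2*ℓ*rB*rC)
        (c1 := 2*rB*(1-ℓ*yA) - 2*ℓ*rC*(1-yC) - 2*a*rC)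
        (plo := (yA + tlo*rC, yC - tlo*rB, 0)) (phi := (yA + thi*rC, yC - thi*rB, 0))
        (tlo := tlo) (thi := thi) hmin hc2 h1 h2
        (by simp only [Fg]
            rw [max_eq_left (show (0:ℝ) ≤ 1 - 0 - (yA + tlo*rC) by linarith),
              max_eq_left (show (0:ℝ) ≤ 1 - 0 - yA by linarith)]
            ring)
        (by simp only [Fg]
            rw [max_eq_left (show (0:ℝ) ≤ 1 - 0 - (yA + thi*rC) by linarith),
              max_eq_left (show (0:ℝ) ≤ 1 - 0 - yA by linarith)]
            ring)
    rcases key with h | h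
    · exact ⟨_, hloS, h, Or.inl rfl, by simpa using tight tlo (Or.inl rfl)⟩
    · exact ⟨_, hhiS, h, Or.inl rfl, by simpa using tight thi (Or.inr rfl)⟩
  · have key := move_pick (c2 := -2*ℓ*rB*rC)
        (c1 := 2*rB*(1-ℓ*yA) - 2*ℓ*rC*(1-yC))
        (plo := (yA + tlo*rC, yC - tlo*rB, 1)) (phi := (yA + thi*rC, yC - thi*rB, 1))
        (tlo := tlo) (thi := thi) hmin hc2 h1 h2
        (by simp only [Fg]
            rw [max_eq_right (show 1 - 1 - (yA + tlo*rC) ≤ (0:ℝ) by linarith),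
              max_eq_right (show 1 - 1 - yA ≤ (0:ℝ) by linarith)]
            ring)
        (by simp only [Fg]
            rw [max_eq_right (show 1 - 1 - (yA + thi*rC) ≤ (0:ℝ) by linarith),
              max_eq_right (show 1 - 1 - yA ≤ (0:ℝ) by linarith)]
            ring)
    rcases key with h | h
    · exact ⟨_, hloS, h, Or.inr rfl, by simpa using tight tlo (Or.inl rfl)⟩
    · exact ⟨_, hhiS, h, Or.inr rfl, by simpa using tight thi (Or.inr rfl)⟩

private lemma not_frac {x : ℝ} (h : x = 0 ∨ x = 1) : ¬ (0 < x ∧ x < 1) := by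
  rintro ⟨h1, h2⟩
  rcases h with rfl | rfl <;> linarith

theorem extremal_minimizer_of_gap_cost
    (rB rC ℓ a : ℝ) (hrB : 0 < rB) (hrC : 0 < rC) (hrB1 : rB < 1)
    (hsum : 1 < rB + rC) (hℓ : ℓ ∈ Set.Ioo (0:ℝ) 1) (ha : a ∈ Set.Ioo (0:ℝ) 1) :
    ∃ xA xC xB : ℝ,
      (xA ∈ Set.Icc (0:ℝ) 1 ∧ xC ∈ Set.Icc (0:ℝ) 1 ∧ xB ∈ Set.Icc (0:ℝ) 1 ∧
        xA * rB + xB * rB + xC * rC = 1) ∧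
      (∀ yA yC yB : ℝ,
        yA ∈ Set.Icc (0:ℝ) 1 → yC ∈ Set.Icc (0:ℝ) 1 → yB ∈ Set.Icc (0:ℝ) 1 →
        yA * rB + yB * rB + yC * rC = 1 →
        ℓ + 2 * (1 - xC) * (1 - ℓ * xA) + 2 * a * ℓ * (1 - xB)
            + 2 * a * max (1 - xB - xA) 0 ≤
          ℓ + 2 * (1 - yC) * (1 - ℓ * yA) + 2 * a * ℓ * (1 - yB)
            + 2 * a * max (1 - yB - yA) 0) ∧
      ((¬ (0 < xA ∧ xA < 1) ∧ ¬ (0 < xC ∧ xC < 1)) ∨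
       (¬ (0 < xA ∧ xA < 1) ∧ ¬ (0 < xB ∧ xB < 1)) ∨
       (¬ (0 < xC ∧ xC < 1) ∧ ¬ (0 < xB ∧ xB < 1))) := by
  obtain ⟨p, hp, hmin⟩ := exists_min rB rC ℓ a hrC hrB1 hsum
  obtain ⟨p1, hp1, hmin1, hcase⟩ := step1 hp hmin
  have main : ∃ p2 ∈ Pcube rB rC, (∀ q ∈ Pcube rB rC, Fg ℓ a p2 ≤ Fg ℓ a q) ∧
      ((¬ (0 < p2.1 ∧ p2.1 < 1) ∧ ¬ (0 < p2.2.1 ∧ p2.2.1 < 1)) ∨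
       (¬ (0 < p2.1 ∧ p2.1 < 1) ∧ ¬ (0 < p2.2.2 ∧ p2.2.2 < 1)) ∨
       (¬ (0 < p2.2.1 ∧ p2.2.1 < 1) ∧ ¬ (0 < p2.2.2 ∧ p2.2.2 < 1))) := by
    rcases hcase with hA | hA | hB | hB
    · obtain ⟨p2, hp2, hmin2, hA2, hrest⟩ := step2A hrB hrC hp1 hmin1 (Or.inl hA)
      refine ⟨p2, hp2, hmin2, ?_⟩
      rcases hrest with h | h | h | h
      · exact Or.inl ⟨not_frac hA2, not_frac (Or.inl h)⟩
      · exact Or.inl ⟨not_frac hA2, not_frac (Or.inr h)⟩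
      · exact Or.inr (Or.inl ⟨not_frac hA2, not_frac (Or.inl h)⟩)
      · exact Or.inr (Or.inl ⟨not_frac hA2, not_frac (Or.inr h)⟩)
    · obtain ⟨p2, hp2, hmin2, hA2, hrest⟩ := step2A hrB hrC hp1 hmin1 (Or.inr hA)
      refine ⟨p2, hp2, hmin2, ?_⟩
      rcases hrest with h | h | h | h
      · exact Or.inl ⟨not_frac hA2, not_frac (Or.inl h)⟩
      · exact Or.inl ⟨not_frac hA2, not_frac (Or.inr h)⟩
      · exact Or.inr (Or.inl ⟨not_frac hA2, not_frac (Or.inl h)⟩)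
      · exact Or.inr (Or.inl ⟨not_frac hA2, not_frac (Or.inr h)⟩)
    · obtain ⟨p2, hp2, hmin2, hB2, hrest⟩ := step2B hrB hrC hℓ.1.le hp1 hmin1 (Or.inl hB)
      refine ⟨p2, hp2, hmin2, ?_⟩
      rcases hrest with h | h | h | h
      · exact Or.inr (Or.inl ⟨not_frac (Or.inl h), not_frac hB2⟩)
      · exact Or.inr (Or.inl ⟨not_frac (Or.inr h), not_frac hB2⟩)
      · exact Or.inr (Or.inr ⟨not_frac (Or.inl h), not_frac hB2⟩)
      · exact Or.inr (Or.inr ⟨not_frac (Or.inr h), not_frac hB2⟩)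
    · obtain ⟨p2, hp2, hmin2, hB2, hrest⟩ := step2B hrB hrC hℓ.1.le hp1 hmin1 (Or.inr hB)
      refine ⟨p2, hp2, hmin2, ?_⟩
      rcases hrest with h | h | h | h
      · exact Or.inr (Or.inl ⟨not_frac (Or.inl h), not_frac hB2⟩)
      · exact Or.inr (Or.inl ⟨not_frac (Or.inr h), not_frac hB2⟩)
      · exact Or.inr (Or.inr ⟨not_frac (Or.inl h), not_frac hB2⟩)
      · exact Or.inr (Or.inr ⟨not_frac (Or.inr h), not_frac hB2⟩)
  obtain ⟨⟨zA, zC, zB⟩, hz, hzmin, hzext⟩ := main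
  obtain ⟨⟨h1, h2⟩, ⟨h3, h4⟩, ⟨h5, h6⟩, h7⟩ := hz
  refine ⟨zA, zC, zB, ⟨Set.mem_Icc.mpr ⟨h1, h2⟩, Set.mem_Icc.mpr ⟨h3, h4⟩,
    Set.mem_Icc.mpr ⟨h5, h6⟩, h7⟩, ?_, hzext⟩
  intro yA yC yB hyA hyC hyB hycon
  have := hzmin (yA, yC, yB) (Pcube_mk.mpr ⟨Set.mem_Icc.mp hyA, Set.mem_Icc.mp hyC,
    Set.mem_Icc.mp hyB, hycon⟩)
  simpa [Fg] using this
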